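/- arXiv:1809.05315 — 2 statements merged into one kernel-verified Lean document; each statement's English description precedes it below -/
import Mathlib

section
/- Let k1 < 0, k2 ∈ ℝ, β(τ) = k1 ln τ + k2, and τ*(d) = k1 d/(k1 d − 1). Then the maximal expected unit profit d ↦ Π(τ*(d), d) = (1 − τ*(d))·e^{−β(τ*(d))·d} is strictly decreasing in d on (0,∞) and tends to 0 as d → ∞. -/
open Real Set Filter

private lemma key_eq (k1 k2 d : ℝ) (hk1 : k1 < 0) (hd : 0 < d) :
    (1 - k1 * d / (k1 * d - 1)) *
        Real.exp (-(k1 * Real.log (k1 * d / (k1 * d - 1)) + k2) * d) =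
      Real.exp ((-k1 * d) * Real.log (-k1 * d)
        - (-k1 * d + 1) * Real.log (-k1 * d + 1) - k2 * d) := by
  have hu : 0 < -k1 * d := mul_pos (by linarith) hd
  set u : ℝ := -k1 * d with hu_def
  have hu1 : 0 < u + 1 := by linarith
  have h1 : k1 * d = -u := by rw [hu_def]; ring
  have h2 : k1 * d - 1 = -(u + 1) := by rw [hu_def]; ring
  have hτ : k1 * d / (k1 * d - 1) = u / (u + 1) := by
    rw [h1, show -u - 1 = -(u + 1) by ring, neg_div_neg_eq]
  have hlog : Real.log (u / (u + 1)) = Real.log u - Real.log (u + 1) :=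
    Real.log_div hu.ne' hu1.ne'
  have h1τ : 1 - u / (u + 1) = Real.exp (-Real.log (u + 1)) := by
    rw [Real.exp_neg, Real.exp_log hu1]
    field_simp
    ring
  rw [hτ, hlog, h1τ, ← Real.exp_add]
  congr 1
  linear_combination (Real.log (u + 1) - Real.log u) * h1

private lemma G_deriv (k1 k2 d : ℝ) (hk1 : k1 < 0) (hd : 0 < d) :
    HasDerivAt (fun d : ℝ => (-k1 * d) * Real.log (-k1 * d)
        - (-k1 * d + 1) * Real.log (-k1 * d + 1) - k2 * d)
      ((-k1) * (Real.log (-k1 * d) + 1) - (-k1) * (Real.log (-k1 * d + 1) + 1) - k2) d := by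
  have hu : 0 < -k1 * d := mul_pos (by linarith) hd
  have hlin : HasDerivAt (fun d : ℝ => -k1 * d) (-k1) d := by
    simpa using (hasDerivAt_id d).const_mul (-k1)
  have hlin1 : HasDerivAt (fun d : ℝ => -k1 * d + 1) (-k1) d := hlin.add_const 1
  have h1 : HasDerivAt (fun d : ℝ => (-k1 * d) * Real.log (-k1 * d))
      ((Real.log (-k1 * d) + 1) * (-k1)) d :=
    (Real.hasDerivAt_mul_log hu.ne').comp d hlin
  have h2 : HasDerivAt (fun d : ℝ => (-k1 * d + 1) * Real.log (-k1 * d + 1))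
      ((Real.log (-k1 * d + 1) + 1) * (-k1)) d := by
    have := (Real.hasDerivAt_mul_log (by linarith : -k1 * d + 1 ≠ 0)).comp d hlin1; exact this
  have h3 : HasDerivAt (fun d : ℝ => k2 * d) k2 d := by
    simpa using (hasDerivAt_id d).const_mul k2
  have := (h1.sub h2).sub h3
  rw [show (-k1) * (Real.log (-k1 * d) + 1) - (-k1) * (Real.log (-k1 * d + 1) + 1) - k2
      = (Real.log (-k1 * d) + 1) * -k1 - (Real.log (-k1 * d + 1) + 1) * -k1 - k2 by ring]
  exact this

theorem max_profit_decreasing (k1 k2 : ℝ) (hk1 : k1 < 0) (hk2 : 0 < k2) :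
    StrictAntiOn
      (fun d : ℝ =>
        (1 - k1 * d / (k1 * d - 1)) *
          Real.exp (-(k1 * Real.log (k1 * d / (k1 * d - 1)) + k2) * d))
      (Set.Ioi 0) ∧
    Filter.Tendsto
      (fun d : ℝ =>
        (1 - k1 * d / (k1 * d - 1)) *
          Real.exp (-(k1 * Real.log (k1 * d / (k1 * d - 1)) + k2) * d))
      Filter.atTop (nhds 0) := by
  set G : ℝ → ℝ := fun d => (-k1 * d) * Real.log (-k1 * d)
      - (-k1 * d + 1) * Real.log (-k1 * d + 1) - k2 * d with hG
  -- G is strictly antitone on Ioi 0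
  have hGanti : StrictAntiOn G (Set.Ioi 0) := by
    apply strictAntiOn_of_deriv_neg (convex_Ioi 0)
    · intro d hd
      have hd' : 0 < d := hd
      exact ((G_deriv k1 k2 d hk1 hd').continuousAt).continuousWithinAt
    · intro d hd
      rw [interior_Ioi] at hd
      have hd' : 0 < d := hd
      rw [(G_deriv k1 k2 d hk1 hd').deriv]
      have hu : 0 < -k1 * d := mul_pos (by linarith) hd
      have hlog : Real.log (-k1 * d) < Real.log (-k1 * d + 1) :=
        Real.log_lt_log hu (by linarith)
      nlinarith
  -- bound : G d ≤ -(k2*d) for d > 0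
  have hGle : ∀ d : ℝ, 0 < d → G d ≤ -(k2 * d) := by
    intro d hd
    have hu : 0 < -k1 * d := mul_pos (by linarith) hd
    have h1 : Real.log (-k1 * d) ≤ Real.log (-k1 * d + 1) :=
      (Real.log_lt_log hu (by linarith)).le
    have h2 : 0 ≤ Real.log (-k1 * d + 1) := Real.log_nonneg (by linarith)
    have : (-k1 * d) * Real.log (-k1 * d) ≤ (-k1 * d + 1) * Real.log (-k1 * d + 1) := by
      nlinarith
    simp only [hG]
    linarith
  constructor
  · intro a ha b hb hab
    have ha' : (0:ℝ) < a := ha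
    have hb' : (0:ℝ) < b := hb
    show (1 - k1 * b / (k1 * b - 1)) *
          Real.exp (-(k1 * Real.log (k1 * b / (k1 * b - 1)) + k2) * b) <
        (1 - k1 * a / (k1 * a - 1)) *
          Real.exp (-(k1 * Real.log (k1 * a / (k1 * a - 1)) + k2) * a)
    rw [key_eq k1 k2 a hk1 ha', key_eq k1 k2 b hk1 hb']
    exact Real.exp_lt_exp.mpr (hGanti ha hb hab)
  · have hsq : Filter.Tendsto (fun d : ℝ => Real.exp (-k2 * d)) Filter.atTop (nhds 0) := by
      apply Real.tendsto_exp_atBot.comp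
      exact Filter.Tendsto.const_mul_atTop_of_neg (by linarith : -k2 < 0) Filter.tendsto_id
    apply squeeze_zero' (g := fun d : ℝ => Real.exp (-k2 * d))
    · filter_upwards [Filter.eventually_gt_atTop 0] with d hd
      rw [key_eq k1 k2 d hk1 hd]
      exact (Real.exp_pos _).le
    · filter_upwards [Filter.eventually_gt_atTop 0] with d hd
      rw [key_eq k1 k2 d hk1 hd]
      have h := hGle d hd
      simp only [hG] at h
      exact Real.exp_le_exp.mpr (by linarith)
    · exact hsq
end

section
/- Let λ > 0 be a user density, R > 0 a coverage radius, k1 < 0, k2 > 0 and β(τ) = k1 ln τ + k2 (assumed positive on (0,1)). Fix W > 0 with W > R and define N = λπW², P^R = R²/W², and P^D(τ, d_u) = (2/(W²β(τ)²))((−β(τ)(R+d_u) − 1)e^{−β(τ)d_u} + β(τ)R + 1). Then lim_{W→∞, d_u = W−R} N·(P^R + (1−τ)·P^D(τ, W−R)) = λπ·(R² + (2(1−τ)/β(τ)²)·(β(τ)R + 1)). -/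
open Real Filter Set

theorem limiting_regional_revenue (lam R k1 k2 τ : ℝ)
    (hlam : 0 < lam) (hR : 0 < R) (hk1 : k1 < 0) (hk2 : 0 < k2)
    (hβpos : ∀ t ∈ Set.Ioo (0 : ℝ) 1, 0 < k1 * Real.log t + k2)
    (hτ : τ ∈ Set.Ioo (0 : ℝ) 1) :
    Filter.Tendsto
      (fun W : ℝ =>
        (lam * Real.pi * W ^ 2) *
          (R ^ 2 / W ^ 2 +
            (1 - τ) *
              ((2 / (W ^ 2 * (k1 * Real.log τ + k2) ^ 2)) *
                ((-(k1 * Real.log τ + k2) * (R + (W - R)) - 1) *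
                    Real.exp (-(k1 * Real.log τ + k2) * (W - R)) +
                  (k1 * Real.log τ + k2) * R + 1))))
      Filter.atTop
      (nhds (lam * Real.pi *
        (R ^ 2 + (2 * (1 - τ) / (k1 * Real.log τ + k2) ^ 2) *
          ((k1 * Real.log τ + k2) * R + 1)))) := by
  have hβ : 0 < k1 * Real.log τ + k2 := hβpos τ hτ
  set β := k1 * Real.log τ + k2 with hβdef
  have hβne : β ≠ 0 := ne_of_gt hβ
  -- limit of the exponential term
  have h1 : Tendsto (fun W : ℝ => β * W) atTop atTop :=
    Tendsto.const_mul_atTop hβ tendsto_id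
  have h2 : Tendsto (fun x : ℝ => -(x + 1) * Real.exp (-x)) atTop (nhds 0) := by
    have ha := Real.tendsto_pow_mul_exp_neg_atTop_nhds_zero 1
    have hb := Real.tendsto_exp_neg_atTop_nhds_zero
    have := ((ha.add hb).neg)
    simpa [neg_mul, neg_add, add_mul, mul_comm] using this
  have hg : Tendsto (fun W : ℝ => (-β * (R + (W - R)) - 1) *
      Real.exp (-β * (W - R))) atTop (nhds 0) := by
    have hc : Tendsto (fun W : ℝ =>
        (-(β * W + 1) * Real.exp (-(β * W))) * Real.exp (β * R)) atTop
        (nhds (0 * Real.exp (β * R))) :=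
      (h2.comp h1).mul_const _
    rw [zero_mul] at hc
    refine hc.congr fun W => ?_
    rw [mul_assoc, ← Real.exp_add]
    ring_nf
  -- the eventual form of the function
  have hmain : Tendsto (fun W : ℝ =>
      lam * Real.pi * R ^ 2 + lam * Real.pi * (1 - τ) * (2 / β ^ 2) *
        (((-β * (R + (W - R)) - 1) * Real.exp (-β * (W - R))) + (β * R + 1)))
      atTop (nhds (lam * Real.pi * R ^ 2 + lam * Real.pi * (1 - τ) * (2 / β ^ 2) *
        (0 + (β * R + 1)))) :=
    tendsto_const_nhds.add (tendsto_const_nhds.mul (hg.add tendsto_const_nhds))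
  have heq : ∀ᶠ W : ℝ in atTop,
      lam * Real.pi * R ^ 2 + lam * Real.pi * (1 - τ) * (2 / β ^ 2) *
        (((-β * (R + (W - R)) - 1) * Real.exp (-β * (W - R))) + (β * R + 1)) =
      (lam * Real.pi * W ^ 2) *
          (R ^ 2 / W ^ 2 +
            (1 - τ) *
              ((2 / (W ^ 2 * β ^ 2)) *
                ((-β * (R + (W - R)) - 1) *
                    Real.exp (-β * (W - R)) +
                  β * R + 1))) := by
    filter_upwards [eventually_gt_atTop (0 : ℝ)] with W hW
    have hWne : W ≠ 0 := ne_of_gt hW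
    field_simp
    ring
  have := hmain.congr' heq
  convert this using 2
  field_simp
  ring
end
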